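/- In the setting of the parity-check matrix M (rows given by X^{i−1}·ħ mod f, i = 1,…,n) with f = h·g = g·ħ monic of degree n, g monic of degree n−k, and ħ of degree k with invertible leading coefficient ħ_k: the (n−k) × (n−k) upper-right submatrix of M is lower triangular with diagonal entries ħ_k, θ(ħ_k), …, θ^{n−k−1}(ħ_k), all invertible in A; consequently the right-most n−k columns of M are A-linearly independent and generate a free A-submodule of Aⁿ of rank n−k, which (when A is a finite commutative Frobenius ring) equals the dual code C^⊥, so the transposes of these columns form a parity check matrix of C. -/

import Mathlib

/-- The skew polynomial ring `R = A[X; θ, δ]`: a ring `R` together with a coefficient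
embedding `C : A →+* R` and an indeterminate `X` satisfying the commutation rule
`X * C a = C (θ a) * X + C (δ a)`, such that every element of `R` is, in a unique way,
a left polynomial `Σᵢ C aᵢ * X ^ i`. -/
structure SkewPolyRing (A : Type*) [Ring A] (θ : A →+* A) (δ : A →+ A)
    (R : Type*) [Ring R] where
  /-- embedding of the coefficient ring -/
  C : A →+* R
  /-- the indeterminate -/
  X : R
  /-- the commutation rule `X·a = θ(a)·X + δ(a)` -/
  X_mul : ∀ a : A, X * C a = C (θ a) * X + C (δ a)
  /-- every element of `R` is uniquely a left polynomial in `X` -/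
  equiv : (ℕ →₀ A) ≃ R
  equiv_apply : ∀ p : ℕ →₀ A, equiv p = p.sum fun i a => C a * X ^ i

namespace SkewPolyRing

variable {A : Type*} [Ring A] {θ : A →+* A} {δ : A →+ A} {R : Type*} [Ring R]

/-- the `i`-th coefficient of a skew polynomial -/
noncomputable def coeff (S : SkewPolyRing A θ δ R) (f : R) (i : ℕ) : A :=
  S.equiv.symm f i

/-- the degree of a skew polynomial (the degree of `0` is `⊥ = -∞`) -/
noncomputable def deg (S : SkewPolyRing A θ δ R) (f : R) : WithBot ℕ :=
  (S.equiv.symm f).support.max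

/-- the degree of a skew polynomial, as a natural number -/
noncomputable def natDeg (S : SkewPolyRing A θ δ R) (f : R) : ℕ :=
  (S.deg f).unbotD 0

/-- the leading coefficient of a skew polynomial -/
noncomputable def lc (S : SkewPolyRing A θ δ R) (f : R) : A :=
  S.coeff f (S.natDeg f)

end SkewPolyRing

namespace SkewPolyRing

variable {A : Type*} [Ring A] {θ : A →+* A} {δ : A →+ A} {R : Type*} [Ring R]
variable (S : SkewPolyRing A θ δ R)

lemma equiv_add (p q : ℕ →₀ A) : S.equiv (p + q) = S.equiv p + S.equiv q := by
  simp only [S.equiv_apply]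
  exact Finsupp.sum_add_index' (fun i => by simp) (fun i b₁ b₂ => by simp [add_mul])

lemma symm_add (p q : R) : S.equiv.symm (p + q) = S.equiv.symm p + S.equiv.symm q := by
  apply S.equiv.injective
  simp [S.equiv_add]

lemma equiv_zero : S.equiv 0 = 0 := by
  simp [S.equiv_apply]

/-- `coeff` as an additive monoid hom. -/
noncomputable def coeffHom (j : ℕ) : R →+ A where
  toFun p := S.coeff p j
  map_zero' := by
    have : S.equiv.symm 0 = 0 := by
      rw [← S.equiv_zero, Equiv.symm_apply_apply]
    simp [coeff, this]
  map_add' p q := by simp [coeff, S.symm_add]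

lemma coeffHom_apply (p : R) (j : ℕ) : S.coeffHom j p = S.coeff p j := rfl

lemma coeff_add (p q : R) (j : ℕ) :
    S.coeff (p + q) j = S.coeff p j + S.coeff q j := (S.coeffHom j).map_add p q

lemma coeff_zero' (j : ℕ) : S.coeff (0 : R) j = 0 := (S.coeffHom j).map_zero

lemma coeff_single (a : A) (i j : ℕ) :
    S.coeff (S.C a * S.X ^ i) j = if i = j then a else 0 := by
  have h : S.equiv (Finsupp.single i a) = S.C a * S.X ^ i := by
    rw [S.equiv_apply, Finsupp.sum_single_index (by simp)]
  rw [coeff, ← h, Equiv.symm_apply_apply, Finsupp.single_apply]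

lemma coeff_apply (p : R) (j : ℕ) : S.coeff p j = S.equiv.symm p j := rfl

lemma ext_of_coeff {p q : R} (h : ∀ j, S.coeff p j = S.coeff q j) : p = q := by
  have : S.equiv.symm p = S.equiv.symm q := Finsupp.ext h
  exact S.equiv.symm.injective this

lemma coeff_sum {ι : Type*} (s : Finset ι) (F : ι → R) (j : ℕ) :
    S.coeff (∑ i ∈ s, F i) j = ∑ i ∈ s, S.coeff (F i) j :=
  map_sum (S.coeffHom j) F s

end SkewPolyRing
namespace SkewPolyRing

variable {A : Type*} [Ring A] {θ : A →+* A} {δ : A →+ A} {R : Type*} [Ring R]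
variable (S : SkewPolyRing A θ δ R)

lemma eq_sum (p : R) :
    p = ∑ i ∈ (S.equiv.symm p).support, S.C (S.coeff p i) * S.X ^ i := by
  conv_lhs => rw [← S.equiv.apply_symm_apply p, S.equiv_apply]
  rfl

lemma coeff_C_mul (a : A) (p : R) (j : ℕ) :
    S.coeff (S.C a * p) j = a * S.coeff p j := by
  conv_lhs => rw [S.eq_sum p]
  rw [Finset.mul_sum]
  simp_rw [← mul_assoc, ← map_mul]
  rw [S.coeff_sum]
  simp_rw [S.coeff_single]
  rw [Finset.sum_ite_eq' (S.equiv.symm p).support j (fun i => a * S.coeff p i)]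
  split_ifs with h
  · rfl
  · rw [S.coeff_apply, Finsupp.notMem_support_iff.mp h]  -- coeff p j = symm p j
    rw [mul_zero]

lemma coeff_X_mul_zero (p : R) :
    S.coeff (S.X * p) 0 = δ (S.coeff p 0) := by
  conv_lhs => rw [S.eq_sum p]
  rw [Finset.mul_sum]
  have hterm : ∀ i : ℕ, S.X * (S.C (S.coeff p i) * S.X ^ i)
      = S.C (θ (S.coeff p i)) * S.X ^ (i + 1) + S.C (δ (S.coeff p i)) * S.X ^ i := by
    intro i
    rw [← mul_assoc, S.X_mul, add_mul, mul_assoc, ← pow_succ']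
  simp_rw [hterm]
  rw [S.coeff_sum]
  simp_rw [S.coeff_add, S.coeff_single]
  have : ∀ i ∈ (S.equiv.symm p).support,
      ((if i + 1 = 0 then θ (S.coeff p i) else 0) + if i = 0 then δ (S.coeff p i) else 0)
      = if i = 0 then δ (S.coeff p i) else 0 := by
    intro i _; simp
  rw [Finset.sum_congr rfl this, Finset.sum_ite_eq' (S.equiv.symm p).support 0
    (fun i => δ (S.coeff p i))]
  split_ifs with h
  · rfl
  · rw [S.coeff_apply, Finsupp.notMem_support_iff.mp h, map_zero]

lemma coeff_X_mul_succ (p : R) (j : ℕ) :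
    S.coeff (S.X * p) (j + 1) = θ (S.coeff p j) + δ (S.coeff p (j + 1)) := by
  conv_lhs => rw [S.eq_sum p]
  rw [Finset.mul_sum]
  have hterm : ∀ i : ℕ, S.X * (S.C (S.coeff p i) * S.X ^ i)
      = S.C (θ (S.coeff p i)) * S.X ^ (i + 1) + S.C (δ (S.coeff p i)) * S.X ^ i := by
    intro i
    rw [← mul_assoc, S.X_mul, add_mul, mul_assoc, ← pow_succ']
  simp_rw [hterm]
  rw [S.coeff_sum]
  simp_rw [S.coeff_add, S.coeff_single]
  rw [Finset.sum_add_distrib]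
  have h1 : ∀ i ∈ (S.equiv.symm p).support,
      (if i + 1 = j + 1 then θ (S.coeff p i) else 0)
      = if i = j then θ (S.coeff p i) else 0 := by
    intro i _; simp
  rw [Finset.sum_congr rfl h1,
    Finset.sum_ite_eq' (S.equiv.symm p).support j (fun i => θ (S.coeff p i)),
    Finset.sum_ite_eq' (S.equiv.symm p).support (j + 1) (fun i => δ (S.coeff p i))]
  congr 1
  · split_ifs with h
    · rfl
    · rw [S.coeff_apply, Finsupp.notMem_support_iff.mp h, map_zero]
  · split_ifs with h
    · rfl
    · rw [S.coeff_apply, Finsupp.notMem_support_iff.mp h, map_zero]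

end SkewPolyRing
namespace SkewPolyRing

variable {A : Type*} [Ring A] {θ : A →+* A} {δ : A →+ A} {R : Type*} [Ring R]
variable (S : SkewPolyRing A θ δ R)

lemma coeff_X_pow_mul (m e : ℕ) (p : R) (hp : ∀ i, e < i → S.coeff p i = 0) :
    (∀ j, m + e < j → S.coeff (S.X ^ m * p) j = 0) ∧
      S.coeff (S.X ^ m * p) (m + e) = (⇑θ)^[m] (S.coeff p e) := by
  induction m with
  | zero => simpa using hp
  | succ m ih =>
    have hX : S.X ^ (m + 1) * p = S.X * (S.X ^ m * p) := by
      rw [pow_succ', mul_assoc]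
    constructor
    · intro j hj
      obtain ⟨j', rfl⟩ : ∃ j', j = j' + 1 := ⟨j - 1, by omega⟩
      rw [hX, S.coeff_X_mul_succ, ih.1 j' (by omega), ih.1 (j' + 1) (by omega),
        map_zero, map_zero, add_zero]
    · have : m + 1 + e = (m + e) + 1 := by omega
      rw [hX, this, S.coeff_X_mul_succ, ih.2, ih.1 (m + e + 1) (by omega), map_zero,
        add_zero, ← Function.iterate_succ_apply' θ]

lemma coeff_X_pow_mul_zero' (m e : ℕ) (p : R) (hp : ∀ i, e ≤ i → S.coeff p i = 0) :
    ∀ j, m + e ≤ j → S.coeff (S.X ^ m * p) j = 0 := by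
  induction m with
  | zero => simpa using hp
  | succ m ih =>
    have hX : S.X ^ (m + 1) * p = S.X * (S.X ^ m * p) := by
      rw [pow_succ', mul_assoc]
    intro j hj
    obtain ⟨j', rfl⟩ : ∃ j', j = j' + 1 := ⟨j - 1, by omega⟩
    rw [hX, S.coeff_X_mul_succ, ih j' (by omega), ih (j' + 1) (by omega),
      map_zero, map_zero, add_zero]

lemma coeff_mul_top (p q : R) (d e : ℕ) (hp : ∀ i, d < i → S.coeff p i = 0)
    (hq : ∀ i, e < i → S.coeff q i = 0) :
    S.coeff (p * q) (d + e) = S.coeff p d * (⇑θ)^[d] (S.coeff q e) := by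
  conv_lhs => rw [S.eq_sum p]
  rw [Finset.sum_mul]
  simp_rw [mul_assoc]
  rw [S.coeff_sum]
  simp_rw [S.coeff_C_mul]
  rw [Finset.sum_eq_single d]
  · rw [(S.coeff_X_pow_mul d e q hq).2]
  · intro i hi hne
    rcases lt_or_gt_of_ne hne with hlt | hgt
    · rw [(S.coeff_X_pow_mul i e q hq).1 (d + e) (by omega), mul_zero]
    · rw [hp i hgt, zero_mul]
  · intro hd
    rw [S.coeff_apply, Finsupp.notMem_support_iff.mp hd, zero_mul]

lemma coeff_mul_zero' (p q : R) (d e : ℕ) (hp : ∀ i, d ≤ i → S.coeff p i = 0)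
    (hq : ∀ i, e ≤ i → S.coeff q i = 0) :
    ∀ j, d + e ≤ j + 1 → S.coeff (p * q) j = 0 := by
  intro j hj
  conv_lhs => rw [S.eq_sum p]
  rw [Finset.sum_mul]
  simp_rw [mul_assoc]
  rw [S.coeff_sum]
  simp_rw [S.coeff_C_mul]
  apply Finset.sum_eq_zero
  intro i _
  by_cases hi : d ≤ i
  · rw [hp i hi, zero_mul]
  · rw [S.coeff_X_pow_mul_zero' i e q hq j (by omega), mul_zero]

lemma coeff_eq_zero_of_deg {p : R} {d : ℕ} (hd : S.deg p = (d : WithBot ℕ)) :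
    ∀ i, d < i → S.coeff p i = 0 := by
  intro i hi
  rw [S.coeff_apply]
  by_contra hne
  have hmem : i ∈ (S.equiv.symm p).support := Finsupp.mem_support_iff.mpr hne
  have := Finset.le_max hmem
  rw [show (S.equiv.symm p).support.max = S.deg p from rfl, hd] at this
  rw [Nat.cast_withBot, WithBot.coe_le_coe] at this
  omega

lemma natDeg_spec {p : R} (hp : p ≠ 0) :
    S.coeff p (S.natDeg p) ≠ 0 ∧ ∀ i, S.natDeg p < i → S.coeff p i = 0 := by
  have hpf : S.equiv.symm p ≠ 0 := by
    intro h
    apply hp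
    have := congrArg S.equiv h
    rwa [Equiv.apply_symm_apply, S.equiv_zero] at this
  have hne : (S.equiv.symm p).support.Nonempty := Finsupp.support_nonempty_iff.mpr hpf
  have hmax : (S.equiv.symm p).support.max = ((S.equiv.symm p).support.max' hne : ℕ) :=
    (Finset.coe_max' hne).symm
  have hnd : S.natDeg p = (S.equiv.symm p).support.max' hne := by
    rw [natDeg, deg, hmax]; rfl
  constructor
  · rw [hnd, S.coeff_apply]
    exact Finsupp.mem_support_iff.mp (Finset.max'_mem _ hne)
  · intro i hi
    rw [S.coeff_apply]
    by_contra hne'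
    have := Finset.le_max' _ i (Finsupp.mem_support_iff.mpr hne')
    rw [hnd] at hi
    omega

end SkewPolyRing
namespace SkewPolyRing

variable {A : Type*} [Ring A] {θ : A →+* A} {δ : A →+ A} {R : Type*} [Ring R]
variable (S : SkewPolyRing A θ δ R)

lemma coeff_sub (p q : R) (j : ℕ) :
    S.coeff (p - q) j = S.coeff p j - S.coeff q j := map_sub (S.coeffHom j) p q

lemma eq_zero_of_mul_monic (fR : R) (m : ℕ) (hd : ∀ i, m < i → S.coeff fR i = 0)
    (hm : S.coeff fR m = 1) (q : R) (hb : ∀ j, m ≤ j → S.coeff (q * fR) j = 0) :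
    q = 0 := by
  by_contra hq
  obtain ⟨hlc, hbd⟩ := S.natDeg_spec hq
  have htop := S.coeff_mul_top q fR (S.natDeg q) m hbd hd
  rw [hm, iterate_map_one, mul_one] at htop
  exact hlc (htop ▸ hb (S.natDeg q + m) (by omega))

/-- the polynomial with coefficient vector `v` -/
noncomputable def lpoly (m : ℕ) (v : Fin m → A) : R :=
  ∑ i : Fin m, S.C (v i) * S.X ^ (i : ℕ)

lemma coeff_lpoly (m : ℕ) (v : Fin m → A) (j : ℕ) :
    S.coeff (S.lpoly m v) j = if h : j < m then v ⟨j, h⟩ else 0 := by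
  rw [lpoly, S.coeff_sum]
  simp_rw [S.coeff_single]
  split_ifs with h
  · rw [Finset.sum_eq_single (⟨j, h⟩ : Fin m)]
    · simp
    · intro i _ hne
      rw [if_neg]
      exact fun hij => hne (Fin.ext hij)
    · simp
  · apply Finset.sum_eq_zero
    intro i _
    rw [if_neg]
    omega
    
lemma lpoly_of_coeff (m : ℕ) (p : R) (hb : ∀ j, m ≤ j → S.coeff p j = 0) :
    S.lpoly m (fun i => S.coeff p (i : ℕ)) = p := by
  apply S.ext_of_coeff
  intro j
  rw [S.coeff_lpoly]
  split_ifs with h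
  · rfl
  · exact (hb j (by omega)).symm

end SkewPolyRing
namespace SkewPolyRing

variable {A : Type*} [Ring A] {θ : A →+* A} {δ : A →+ A} {R : Type*} [Ring R]
variable (S : SkewPolyRing A θ δ R)

lemma lpoly_add (m : ℕ) (v w : Fin m → A) :
    S.lpoly m (v + w) = S.lpoly m v + S.lpoly m w := by
  rw [lpoly, lpoly, lpoly, ← Finset.sum_add_distrib]
  exact Finset.sum_congr rfl fun i _ => by simp [add_mul]

lemma lpoly_smul (m : ℕ) (a : A) (v : Fin m → A) :
    S.lpoly m (a • v) = S.C a * S.lpoly m v := by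
  rw [lpoly, lpoly, Finset.mul_sum]
  exact Finset.sum_congr rfl fun i _ => by simp [mul_assoc]

lemma lpoly_zero (m : ℕ) : S.lpoly m (0 : Fin m → A) = 0 := by
  simp [lpoly]

end SkewPolyRing
/-- In the setting of the parity-check matrix `M` (rows given by
`X^(i-1) * ħ mod f`) with `f = h * g = g * ħ` monic of degree `n`, `g` monic of degree
`n - k`, and `ħ` of degree `k` with invertible leading coefficient `ħ_k`: the
`(n-k) × (n-k)` upper-right submatrix of `M` is lower triangular with diagonal entries
`ħ_k, θ(ħ_k), …, θ^(n-k-1)(ħ_k)`, all invertible; consequently the right-most `n - k`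
columns of `M` are `A`-linearly independent (so they generate a free `A`-submodule of
`Aⁿ` of rank `n - k`), and when `A` is Frobenius this submodule equals the dual code
`C^⊥` (so the transposed columns form a parity check matrix of `C`). -/
theorem parityCheck_from_columns
    {A R : Type*} [CommRing A] [Nontrivial A] [Finite A] [Ring R]
    (θ : A →+* A) (δ : A →+ A)
    (hδ : ∀ a b : A, δ (a * b) = δ a * b + θ a * δ b)
    (S : SkewPolyRing A θ δ R)
    (f g h hbar : R) (n k : ℕ) (hkn : k ≤ n)
    (hdegf : S.deg f = (n : WithBot ℕ)) (hmf : S.coeff f n = 1)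
    (h1 : f = h * g) (h2 : f = g * hbar)
    (hdegg : S.deg g = ((n - k : ℕ) : WithBot ℕ)) (hmg : S.coeff g (n - k) = 1)
    (hdeghbar : S.deg hbar = (k : WithBot ℕ))
    (hlc : IsUnit (S.coeff hbar k))
    (M : Matrix (Fin n) (Fin n) A)
    (hM : ∀ i : Fin n, ∃ q : R,
      S.X ^ (i : ℕ) * hbar = q * f + ∑ j : Fin n, S.C (M i j) * S.X ^ (j : ℕ))
    (C : Set (Fin n → A))
    (hC : C = {w | ∃ u : R, (∑ i : Fin n, S.C (w i) * S.X ^ (i : ℕ)) = u * g}) :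
    -- the upper-right (n-k)×(n-k) submatrix is lower triangular …
    (∀ i j : Fin (n - k), (i : ℕ) < (j : ℕ) →
      M (Fin.castLE (by omega) i) (Fin.cast (by omega) (j.addNat k)) = 0) ∧
    -- … with diagonal entries θ^i(ħ_k), …
    (∀ i : Fin (n - k),
      M (Fin.castLE (by omega) i) (Fin.cast (by omega) (i.addNat k))
        = (⇑θ)^[(i : ℕ)] (S.coeff hbar k)) ∧
    -- … which are invertible in A;
    (∀ i : Fin (n - k),
      IsUnit (M (Fin.castLE (by omega) i) (Fin.cast (by omega) (i.addNat k)))) ∧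
    -- the right-most n-k columns of M are A-linearly independent …
    LinearIndependent A
      (fun j : Fin (n - k) => fun i : Fin n => M i (Fin.cast (by omega) (j.addNat k))) ∧
    -- … and, when A is Frobenius, they generate the dual code C^⊥.
    ((∀ D : Submodule A (Fin n → A),
        Nat.card D * Nat.card {v : Fin n → A | ∀ d ∈ D, ∑ i, v i * d i = 0}
          = Nat.card A ^ n) →
      (Submodule.span A
          (Set.range fun j : Fin (n - k) =>
            fun i : Fin n => M i (Fin.cast (by omega) (j.addNat k))) :
          Set (Fin n → A))
        = {v : Fin n → A | ∀ c ∈ C, ∑ i, v i * c i = 0}) := by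
  clear hδ h1
  have hbf : ∀ i, k < i → S.coeff hbar i = 0 := S.coeff_eq_zero_of_deg hdeghbar
  have hff : ∀ i, n < i → S.coeff f i = 0 := S.coeff_eq_zero_of_deg hdegf
  have hgf : ∀ i, n - k < i → S.coeff g i = 0 := S.coeff_eq_zero_of_deg hdegg
  -- rows with (r:ℕ) + k < n represent X^r * hbar exactly
  have hrow : ∀ r : Fin n, (r : ℕ) + k < n → ∀ j : Fin n,
      M r j = S.coeff (S.X ^ (r : ℕ) * hbar) (j : ℕ) := by
    intro r hr j
    obtain ⟨q, hq⟩ := hM r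
    have hq' : S.X ^ (r : ℕ) * hbar = q * f + S.lpoly n (M r) := hq
    have hq0 : q = 0 := by
      apply S.eq_zero_of_mul_monic f n hff hmf
      intro j' hj'
      have hsub : q * f = S.X ^ (r : ℕ) * hbar - S.lpoly n (M r) := by
        rw [hq', add_sub_cancel_right]
      rw [hsub, S.coeff_sub, (S.coeff_X_pow_mul (r : ℕ) k hbar hbf).1 j' (by omega),
        S.coeff_lpoly, dif_neg (by omega), sub_zero]
    rw [hq0, zero_mul, zero_add] at hq'
    rw [hq', S.coeff_lpoly, dif_pos j.isLt]
  have key1 : ∀ r c : Fin n, (r : ℕ) + k < n → (r : ℕ) + k < (c : ℕ) → M r c = 0 := by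
    intro r c hrk hc
    rw [hrow r hrk c, (S.coeff_X_pow_mul (r : ℕ) k hbar hbf).1 (c : ℕ) hc]
  have key2 : ∀ r c : Fin n, (r : ℕ) + k < n → (c : ℕ) = (r : ℕ) + k →
      M r c = (⇑θ)^[(r : ℕ)] (S.coeff hbar k) := by
    intro r c hrk hc
    rw [hrow r hrk c, hc, (S.coeff_X_pow_mul (r : ℕ) k hbar hbf).2]
  have unit_it : ∀ m : ℕ, IsUnit ((⇑θ)^[m] (S.coeff hbar k)) := by
    intro m
    induction m with
    | zero => simpa using hlc
    | succ m ih => rw [Function.iterate_succ_apply']; exact ih.map θ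
  have goal1 : ∀ i j : Fin (n - k), (i : ℕ) < (j : ℕ) →
      M (Fin.castLE (by omega) i) (Fin.cast (by omega) (j.addNat k)) = 0 := by
    intro i j hij
    have hi := i.isLt
    have hj := j.isLt
    apply key1 <;>
      simp only [Fin.coe_castLE, Fin.coe_cast, Fin.coe_addNat] <;> omega
  have goal2 : ∀ i : Fin (n - k),
      M (Fin.castLE (by omega) i) (Fin.cast (by omega) (i.addNat k))
        = (⇑θ)^[(i : ℕ)] (S.coeff hbar k) := by
    intro i
    have hi := i.isLt
    apply key2 <;>
      simp only [Fin.coe_castLE, Fin.coe_cast, Fin.coe_addNat] <;> omega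
  have goal4 : LinearIndependent A
      (fun j : Fin (n - k) => fun i : Fin n => M i (Fin.cast (by omega) (j.addNat k))) := by
    rw [Fintype.linearIndependent_iff]
    intro c hc
    have hrows : ∀ r : Fin n,
        ∑ j : Fin (n - k), c j * M r (Fin.cast (by omega : n - k + k = n) (j.addNat k)) = 0 := by
      intro r
      have := congrFun hc r
      simpa [Finset.sum_apply] using this
    suffices hsuff : ∀ m, ∀ hm : m < n - k, c ⟨m, hm⟩ = 0 by
      intro j
      have := hsuff (j : ℕ) j.isLt
      simpa using this
    intro m
    induction m using Nat.strong_induction_on with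
    | _ m ih =>
      intro hm
      have heq := hrows ⟨m, by omega⟩
      rw [Finset.sum_eq_single (⟨m, hm⟩ : Fin (n - k))] at heq
      · have hd := key2 ⟨m, by omega⟩
          (Fin.cast (by omega : n - k + k = n) ((⟨m, hm⟩ : Fin (n - k)).addNat k))
          (by simp; omega) (by simp)
        rw [hd] at heq
        exact (IsUnit.mul_left_eq_zero (unit_it m)).mp heq
      · intro j' _ hne
        have hj' := j'.isLt
        rcases lt_or_gt_of_ne (fun hh : (j' : ℕ) = m => hne (Fin.ext hh)) with hlt | hgt
        · rw [show c j' = 0 from ih (j' : ℕ) hlt j'.isLt, zero_mul]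
        · rw [key1 ⟨m, by omega⟩ _ (by simp; omega) (by simp; omega), mul_zero]
      · intro habs
        exact absurd (Finset.mem_univ _) habs
  refine ⟨goal1, goal2, fun i => (goal2 i) ▸ unit_it (i : ℕ), goal4, ?_⟩
  -- Frobenius part
  intro hFrob
  have hnkk : n - k + k = n := by omega
  have hkk : k + (n - k) = n := by omega
  let D : Submodule A (Fin n → A) :=
    { carrier := {w | ∃ u : R, S.lpoly n w = u * g}
      add_mem' := by
        rintro w w' ⟨u, hu⟩ ⟨u', hu'⟩
        exact ⟨u + u', by rw [S.lpoly_add, hu, hu', add_mul]⟩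
      zero_mem' := ⟨0, by rw [S.lpoly_zero, zero_mul]⟩
      smul_mem' := by
        rintro a w ⟨u, hu⟩
        exact ⟨S.C a * u, by rw [S.lpoly_smul, hu, mul_assoc]⟩ }
  have hCD : C = ↑D := hC
  -- orthogonality of all columns of M with the code
  have horth : ∀ w ∈ D, ∀ j : Fin n, ∑ i : Fin n, w i * M i j = 0 := by
    rintro w ⟨u, hu⟩ j
    choose q hq using hM
    set w' : Fin n → A := fun j => ∑ i : Fin n, w i * M i j with hw'
    have hstep : S.lpoly n w * hbar = (∑ i : Fin n, S.C (w i) * q i) * f + S.lpoly n w' := by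
      rw [SkewPolyRing.lpoly, Finset.sum_mul]
      have hterm : ∀ i : Fin n, (S.C (w i) * S.X ^ (i : ℕ)) * hbar
          = S.C (w i) * (q i * f) + S.C (w i) * S.lpoly n (M i) := by
        intro i
        rw [mul_assoc, hq i, mul_add]
        rfl
      rw [Finset.sum_congr rfl fun i _ => hterm i, Finset.sum_add_distrib]
      congr 1
      · simp_rw [← mul_assoc]
        rw [← Finset.sum_mul]
      · simp_rw [SkewPolyRing.lpoly, Finset.mul_sum, ← mul_assoc, ← map_mul]
        rw [Finset.sum_comm]
        refine Finset.sum_congr rfl fun j' _ => ?_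
        rw [← Finset.sum_mul, ← map_sum]
    have hstep2 : S.lpoly n w * hbar = u * f := by
      rw [hu, mul_assoc, ← h2]
    have hkey : S.lpoly n w' = (u - ∑ i : Fin n, S.C (w i) * q i) * f := by
      rw [sub_mul, ← hstep2, hstep, add_sub_cancel_left]
    have hq0 : (u - ∑ i : Fin n, S.C (w i) * q i) = 0 := by
      apply S.eq_zero_of_mul_monic f n hff hmf
      intro j' hj'
      rw [← hkey, S.coeff_lpoly, dif_neg (by omega)]
    have h0 : S.lpoly n w' = 0 := by rw [hkey, hq0, zero_mul]
    have := S.coeff_lpoly n w' (j : ℕ)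
    rw [h0, S.coeff_zero', dif_pos j.isLt] at this
    exact this.symm
  have hspanle : Submodule.span A (Set.range fun j : Fin (n - k) =>
      fun i : Fin n => M i (Fin.cast hnkk (j.addNat k)))
      ≤ {carrier := {v | ∀ d ∈ D, ∑ i, v i * d i = 0}
         add_mem' := by
           intro v v' hv hv' d hd
           simp only [Set.mem_setOf_eq] at *
           simp only [Pi.add_apply, add_mul]
           rw [Finset.sum_add_distrib, hv d hd, hv' d hd, add_zero]
         zero_mem' := by intro d hd; simp
         smul_mem' := by
           intro a v hv d hd
           simp only [Set.mem_setOf_eq] at *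
           simp only [Pi.smul_apply, smul_eq_mul, mul_assoc]
           rw [← Finset.mul_sum, hv d hd, mul_zero] } := by
    rw [Submodule.span_le]
    rintro _ ⟨j, rfl⟩
    intro d hd
    have h0 := horth d hd (Fin.cast hnkk (j.addNat k))
    calc (∑ i, M i (Fin.cast hnkk (j.addNat k)) * d i)
        = ∑ i, d i * M i (Fin.cast hnkk (j.addNat k)) :=
          Finset.sum_congr rfl fun i _ => mul_comm _ _
      _ = 0 := h0
  have hcardD : Nat.card D = Nat.card A ^ k := by
    have hbnd : ∀ c : Fin k → A, ∀ j, n ≤ j → S.coeff (S.lpoly k c * g) j = 0 := by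
      intro c j hj
      apply S.coeff_mul_zero' _ _ k (n - k + 1)
      · intro i hi; rw [S.coeff_lpoly, dif_neg (by omega)]
      · intro i hi; exact hgf i (by omega)
      · omega
    let Φ : (Fin k → A) → D := fun c =>
      ⟨fun i : Fin n => S.coeff (S.lpoly k c * g) (i : ℕ),
        ⟨S.lpoly k c, S.lpoly_of_coeff n _ (hbnd c)⟩⟩
    have hinj : Function.Injective Φ := by
      intro c c' hcc
      have hco : ∀ i : Fin n, S.coeff (S.lpoly k c * g) (i : ℕ)
          = S.coeff (S.lpoly k c' * g) (i : ℕ) :=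
        fun i => congrFun (congrArg Subtype.val hcc) i
      have heq : S.lpoly k c * g = S.lpoly k c' * g := by
        apply S.ext_of_coeff
        intro j
        by_cases hj : j < n
        · exact hco ⟨j, hj⟩
        · rw [hbnd c j (by omega), hbnd c' j (by omega)]
      have hz : (S.lpoly k c - S.lpoly k c') * g = 0 := by
        rw [sub_mul, heq, sub_self]
      have hq0 := S.eq_zero_of_mul_monic g (n - k) hgf hmg _
        (fun j _ => by rw [hz, S.coeff_zero'])
      have hl : S.lpoly k c = S.lpoly k c' := by rwa [sub_eq_zero] at hq0
      funext i
      have ha := S.coeff_lpoly k c (i : ℕ)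
      have hb := S.coeff_lpoly k c' (i : ℕ)
      rw [dif_pos i.isLt] at ha hb
      rw [← ha, ← hb, hl]
    have hsurj : Function.Surjective Φ := by
      rintro ⟨w, u, hu⟩
      have hub : ∀ i, k ≤ i → S.coeff u i = 0 := by
        rcases eq_or_ne u 0 with rfl | hu0
        · intro i _; exact S.coeff_zero' i
        · obtain ⟨hlcu, hbdu⟩ := S.natDeg_spec hu0
          have hdlt : S.natDeg u < k := by
            by_contra hge
            have htop := S.coeff_mul_top u g (S.natDeg u) (n - k) hbdu hgf
            rw [hmg, iterate_map_one, mul_one] at htop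
            have h0 : S.coeff (u * g) (S.natDeg u + (n - k)) = 0 := by
              rw [← hu, S.coeff_lpoly, dif_neg (by omega)]
            exact hlcu (by rw [← htop, h0])
          intro i hi; exact hbdu i (by omega)
      refine ⟨fun i => S.coeff u (i : ℕ), ?_⟩
      have hlu : S.lpoly k (fun i => S.coeff u (i : ℕ)) = u := S.lpoly_of_coeff k u hub
      apply Subtype.ext
      funext i
      show S.coeff (S.lpoly k _ * g) (i : ℕ) = w i
      rw [hlu, ← hu, S.coeff_lpoly, dif_pos i.isLt]
    rw [Nat.card_congr (Equiv.ofBijective Φ ⟨hinj, hsurj⟩).symm, Nat.card_fun]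
    simp [Nat.card_eq_fintype_card]
  have hcardSpan : Nat.card ↥(Submodule.span A (Set.range fun j : Fin (n - k) =>
      fun i : Fin n => M i (Fin.cast hnkk (j.addNat k))))
      = Nat.card A ^ (n - k) := by
    rw [Nat.card_congr goal4.linearCombinationEquiv.toEquiv.symm,
      Nat.card_congr (Finsupp.equivFunOnFinite), Nat.card_fun]
    simp [Nat.card_eq_fintype_card]
  have hFD := hFrob D
  have hcardE : Nat.card ↑{v : Fin n → A | ∀ d ∈ D, ∑ i, v i * d i = 0}
      = Nat.card A ^ (n - k) := by
    have hpow : Nat.card A ^ n = Nat.card A ^ k * Nat.card A ^ (n - k) := by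
      rw [← pow_add, hkk]
    rw [hcardD, hpow] at hFD
    have hApos : 0 < Nat.card A := Nat.card_pos
    exact Nat.eq_of_mul_eq_mul_left (pow_pos Nat.card_pos k) hFD
  have hset : {v : Fin n → A | ∀ c ∈ C, ∑ i, v i * c i = 0}
      = {v : Fin n → A | ∀ d ∈ D, ∑ i, v i * d i = 0} := by
    rw [hCD]; rfl
  rw [hset]
  apply Set.eq_of_subset_of_ncard_le
  · exact fun x hx => hspanle hx
  · have hs1 : ({v : Fin n → A | ∀ d ∈ D, ∑ i, v i * d i = 0}).ncard
        = Nat.card A ^ (n - k) := by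
      rw [← Nat.card_coe_set_eq]; exact hcardE
    have hs2 : ((Submodule.span A (Set.range fun j : Fin (n - k) =>
        fun i : Fin n => M i (Fin.cast hnkk (j.addNat k)))
        : Set (Fin n → A))).ncard = Nat.card A ^ (n - k) := by
      rw [← Nat.card_coe_set_eq]; exact hcardSpan
    rw [hs1, hs2]
  · exact Set.toFinite _
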